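/- Let q_n denote the number of independent dominating sets of the para-chain square cactus Q_n. Then q_1 = 2, q_2 = 4, q_3 = 7, and for every n ≥ 4, q_n = 2q_{n-1} − q_{n-2} + q_{n-3}. -/

import Mathlib

/-- `S` is an independent dominating set of `G`: pairwise non-adjacent, and every
vertex outside `S` has a neighbour in `S`. -/
def IsIndepDomSet {V : Type*} (G : SimpleGraph V) (S : Finset V) : Prop :=
  (∀ v ∈ S, ∀ w ∈ S, ¬ G.Adj v w) ∧ ∀ v, v ∉ S → ∃ w ∈ S, G.Adj v w

/-- The para-chain square cactus `Q n`: `Sum.inl i` is the cut vertex `x i`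
(`0 ≤ i ≤ n`), `Sum.inr (Sum.inl k)` is `u (k+1)` and `Sum.inr (Sum.inr k)` is
`w (k+1)` (`0 ≤ k ≤ n-1`); the `i`-th square (`1 ≤ i ≤ n`) is the four-cycle
`x (i-1) – u i – x i – w i – x (i-1)`. -/
def paraSq (n : ℕ) : SimpleGraph (Fin (n + 1) ⊕ (Fin n ⊕ Fin n)) :=
  SimpleGraph.fromRel fun p q =>
    match p, q with
    | Sum.inl i, Sum.inr (Sum.inl k) => (i : ℕ) = (k : ℕ) ∨ (i : ℕ) = (k : ℕ) + 1
    | Sum.inl i, Sum.inr (Sum.inr k) => (i : ℕ) = (k : ℕ) ∨ (i : ℕ) = (k : ℕ) + 1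
    | _, _ => False

/-- The number of independent dominating sets of the para-chain square cactus `Q n`. -/
noncomputable def numIDSParaSq (n : ℕ) : ℕ :=
  Nat.card {S : Finset (Fin (n + 1) ⊕ (Fin n ⊕ Fin n)) // IsIndepDomSet (paraSq n) S}

/-- Automaton acceptor: state `(lf, p)` where `lf` = previous char was `false`,
`p` = previous char was a `false` still needing an adjacent `false`.
Accepts lists where every `false` has an adjacent `false` (from start state
`(false, false)`). -/
def gAcc : Bool → Bool → List Bool → Bool
  | _, p, [] => !p
  | lf, p, b :: l => (!(p && b)) && gAcc (!b) (!b && !lf && !p) l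

/-- every `false` has an adjacent `false` -/
def okQ (l : List Bool) : Prop :=
  ∀ i, l.getD i true = false →
    (0 < i ∧ l.getD (i - 1) true = false) ∨ l.getD (i + 1) true = false

/-- every `false` at a positive position has an adjacent `false` -/
def okR (l : List Bool) : Prop :=
  ∀ i, l.getD i true = false →
    i = 0 ∨ l.getD (i - 1) true = false ∨ l.getD (i + 1) true = false

lemma okQ_true_cons (t : List Bool) : okQ (true :: t) ↔ okQ t := by
  constructor
  · intro h i hi
    have := h (i + 1) (by simpa using hi)
    rcases this with ⟨hpos, hprev⟩ | hnext
    · rcases i with _ | j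
      · simp at hprev
      · left
        refine ⟨Nat.succ_pos _, ?_⟩
        simpa using hprev
    · right; simpa using hnext
  · intro h i hi
    rcases i with _ | j
    · simp at hi
    · have := h j (by simpa using hi)
      rcases this with ⟨hpos, hprev⟩ | hnext
      · left
        refine ⟨Nat.succ_pos _, ?_⟩
        rcases j with _ | j'
        · omega
        · simpa using hprev
      · right; simpa using hnext

lemma okR_true_cons (t : List Bool) : okR (true :: t) ↔ okQ t := by
  constructor
  · intro h i hi
    have := h (i + 1) (by simpa using hi)
    rcases this with h0 | hprev | hnext
    · omega
    · rcases i with _ | j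
      · simp at hprev
      · exact Or.inl ⟨Nat.succ_pos _, by simpa using hprev⟩
    · right; simpa using hnext
  · intro h i hi
    rcases i with _ | j
    · simp at hi
    · have := h j (by simpa using hi)
      rcases this with ⟨hpos, hprev⟩ | hnext
      · right; left
        rcases j with _ | j'
        · omega
        · simpa using hprev
      · right; right; simpa using hnext

lemma okR_false_cons (t : List Bool) : okR (false :: t) ↔ okR t := by
  constructor
  · intro h i hi
    have := h (i + 1) (by simpa using hi)
    rcases this with h0 | hprev | hnext
    · omega
    · rcases i with _ | j
      · exact Or.inl rfl
      · right; left; simpa using hprev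
    · right; right; simpa using hnext
  · intro h i hi
    rcases i with _ | j
    · exact Or.inl rfl
    · have := h j (by simpa using hi)
      rcases this with h0 | hprev | hnext
      · subst h0; right; left; simp
      · rcases j with _ | j'
        · right; left; simp
        · right; left; simpa using hprev
      · right; right; simpa using hnext

lemma okQ_false_cons (t : List Bool) :
    okQ (false :: t) ↔ (t.getD 0 true = false ∧ okR t) := by
  constructor
  · intro h
    have h0 := h 0 (by simp)
    have ht0 : t.getD 0 true = false := by
      rcases h0 with ⟨hpos, _⟩ | hnext
      · omega
      · simpa using hnext
    refine ⟨ht0, ?_⟩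
    intro i hi
    rcases i with _ | j
    · exact Or.inl rfl
    · have := h (j + 2) (by simpa using hi)
      rcases this with ⟨hpos, hprev⟩ | hnext
      · right; left; simpa using hprev
      · right; right; simpa using hnext
  · rintro ⟨ht0, h⟩ i hi
    rcases i with _ | j
    · right; simpa using ht0
    · rcases j with _ | j'
      · left; exact ⟨Nat.one_pos, by simp⟩
      · have := h (j' + 1) (by simpa using hi)
        rcases this with h0 | hprev | hnext
        · omega
        · left
          refine ⟨Nat.succ_pos _, ?_⟩
          simpa using hprev
        · right; simpa using hnext

lemma gAcc_spec (l : List Bool) :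
    (gAcc false false l = true ↔ okQ l) ∧
    (gAcc true true l = true ↔ (l.getD 0 true = false ∧ okR l)) ∧
    (gAcc true false l = true ↔ okR l) := by
  induction l with
  | nil =>
      refine ⟨by simp [gAcc, okQ], by simp [gAcc], by simp [gAcc, okR]⟩
  | cons b t ih =>
      obtain ⟨ihQ, ihTT, ihTF⟩ := ih
      cases b
      · refine ⟨?_, ?_, ?_⟩
        · simpa [gAcc, okQ_false_cons] using ihTT
        · simp only [gAcc, List.getD_cons_zero, okR_false_cons, Bool.not_false,
            Bool.not_true, Bool.and_false, Bool.false_and, Bool.and_true, Bool.true_and,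
            Bool.and_self]
          simpa using ihTF
        · simp only [gAcc]
          rw [okR_false_cons]
          simpa using ihTF
      · refine ⟨?_, ?_, ?_⟩
        · simpa [gAcc, okQ_true_cons] using ihQ
        · simp [gAcc]
        · simp only [gAcc]
          rw [okR_true_cons]
          simpa using ihQ

def tri : ℕ → ℕ × ℕ × ℕ
  | 0 => (1, 0, 1)
  | m + 1 => ((tri m).1 + (tri m).2.1, (tri m).2.2, (tri m).1 + (tri m).2.2)

lemma tri_rec (m : ℕ) :
    (tri (m + 3)).1 + (tri (m + 1)).1 = 2 * (tri (m + 2)).1 + (tri m).1 := by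
  simp [tri]; ring
noncomputable def cnt (lf p : Bool) (m : ℕ) : ℕ :=
  Nat.card {a : Fin m → Bool // gAcc lf p (List.ofFn a) = true}

def boolSplitEquiv {α : Type*} (P : Bool × α → Prop) :
    {x : Bool × α // P x} ≃ {a : α // P (true, a)} ⊕ {a : α // P (false, a)} where
  toFun := fun x => match x with
    | ⟨(true, a), h⟩ => Sum.inl ⟨a, h⟩
    | ⟨(false, a), h⟩ => Sum.inr ⟨a, h⟩
  invFun := fun x => match x with
    | Sum.inl ⟨a, h⟩ => ⟨(true, a), h⟩
    | Sum.inr ⟨a, h⟩ => ⟨(false, a), h⟩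
  left_inv := by rintro ⟨⟨b, a⟩, h⟩; cases b <;> rfl
  right_inv := by rintro (⟨a, h⟩ | ⟨a, h⟩) <;> rfl

lemma cnt_zero (lf p : Bool) : cnt lf p 0 = if p then 0 else 1 := by
  cases p
  · simp only [if_neg Bool.false_ne_true]
    have : ∀ a : Fin 0 → Bool, gAcc lf false (List.ofFn a) = true := by
      intro a; simp [gAcc]
    rw [cnt, Nat.card_congr (Equiv.subtypeUnivEquiv this)]
    simp [Nat.card_eq_fintype_card]
  · have : IsEmpty {a : Fin 0 → Bool // gAcc lf true (List.ofFn a) = true} := by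
      refine ⟨fun x => ?_⟩
      have := x.2
      simp [gAcc] at this
    rw [cnt, Nat.card_of_isEmpty]
    simp

lemma cnt_succ (lf p : Bool) (m : ℕ) :
    cnt lf p (m + 1) =
      (if p then 0 else cnt false false m) + cnt true (!lf && !p) m := by
  have e1 : {a : Fin (m + 1) → Bool // gAcc lf p (List.ofFn a) = true} ≃
      {x : Bool × (Fin m → Bool) //
        gAcc lf p (x.1 :: List.ofFn x.2) = true} := by
    refine (Fin.consEquiv (fun _ : Fin (m + 1) => Bool)).symm.subtypeEquiv fun a => ?_
    rw [List.ofFn_succ]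
    rfl
  rw [cnt, Nat.card_congr e1, Nat.card_congr (boolSplitEquiv _), Nat.card_sum]
  congr 1
  · cases p
    · simp only [if_neg Bool.false_ne_true]
      rw [cnt]
      apply Nat.card_congr
      apply Equiv.subtypeEquivRight
      intro a
      simp [gAcc]
    · have : IsEmpty {a : Fin m → Bool //
          gAcc lf true ((true, a).1 :: List.ofFn (true, a).2) = true} := by
        refine ⟨fun x => ?_⟩
        have := x.2
        simp [gAcc] at this
      rw [Nat.card_of_isEmpty]
      simp
  · rw [cnt]
    apply Nat.card_congr
    apply Equiv.subtypeEquivRight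
    intro a
    simp [gAcc]

lemma cnt_eq_tri (m : ℕ) :
    cnt false false m = (tri m).1 ∧ cnt true true m = (tri m).2.1 ∧
      cnt true false m = (tri m).2.2 := by
  induction m with
  | zero =>
      refine ⟨?_, ?_, ?_⟩ <;> simp [cnt_zero, tri]
  | succ m ih =>
      obtain ⟨h1, h2, h3⟩ := ih
      refine ⟨?_, ?_, ?_⟩ <;>
        simp [cnt_succ, tri, h1, h2, h3]
-- adjacency characterizations
lemma adj_inl_inl {n : ℕ} (i j : Fin (n + 1)) :
    ¬ (paraSq n).Adj (Sum.inl i) (Sum.inl j) := by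
  simp [paraSq, SimpleGraph.fromRel_adj]

lemma adj_inr_inr {n : ℕ} (x y : Fin n ⊕ Fin n) :
    ¬ (paraSq n).Adj (Sum.inr x) (Sum.inr y) := by
  rcases x with k | k <;> rcases y with l | l <;>
    simp [paraSq, SimpleGraph.fromRel_adj]

lemma adj_inl_inrl {n : ℕ} (i : Fin (n + 1)) (k : Fin n) :
    (paraSq n).Adj (Sum.inl i) (Sum.inr (Sum.inl k)) ↔
      ((i : ℕ) = (k : ℕ) ∨ (i : ℕ) = (k : ℕ) + 1) := by
  simp [paraSq, SimpleGraph.fromRel_adj]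

lemma adj_inl_inrr {n : ℕ} (i : Fin (n + 1)) (k : Fin n) :
    (paraSq n).Adj (Sum.inl i) (Sum.inr (Sum.inr k)) ↔
      ((i : ℕ) = (k : ℕ) ∨ (i : ℕ) = (k : ℕ) + 1) := by
  simp [paraSq, SimpleGraph.fromRel_adj]

/-- membership pattern of an independent dominating set determined by `a` on cut vertices -/
def memB {n : ℕ} (a : Fin (n + 1) → Bool) : Fin (n + 1) ⊕ (Fin n ⊕ Fin n) → Bool
  | Sum.inl i => a i
  | Sum.inr (Sum.inl k) => !a k.castSucc && !a k.succ
  | Sum.inr (Sum.inr k) => !a k.castSucc && !a k.succ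

def Sa {n : ℕ} (a : Fin (n + 1) → Bool) : Finset (Fin (n + 1) ⊕ (Fin n ⊕ Fin n)) :=
  Finset.univ.filter fun v => memB a v = true

lemma mem_Sa {n : ℕ} (a : Fin (n + 1) → Bool) (v) : v ∈ Sa a ↔ memB a v = true := by
  simp [Sa]

/-- validity condition on the cut-vertex pattern -/
def validFin {n : ℕ} (a : Fin (n + 1) → Bool) : Prop :=
  ∀ i, a i = false → ∃ k : Fin n,
    (k.succ = i ∧ a k.castSucc = false) ∨ (k.castSucc = i ∧ a k.succ = false)

lemma val_castSucc {n : ℕ} (k : Fin n) : ((k.castSucc : Fin (n+1)) : ℕ) = (k : ℕ) := rfl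
lemma val_succ {n : ℕ} (k : Fin n) : ((k.succ : Fin (n+1)) : ℕ) = (k : ℕ) + 1 := rfl

/-- Every independent dominating set is of the form `Sa a`. -/
lemma ids_eq_Sa {n : ℕ} (S : Finset (Fin (n + 1) ⊕ (Fin n ⊕ Fin n)))
    (h : IsIndepDomSet (paraSq n) S) :
    S = Sa (fun i => decide (Sum.inl i ∈ S)) := by
  obtain ⟨hind, hdom⟩ := h
  ext v
  rcases v with i | (k | k)
  · simp [mem_Sa, memB]
  · rw [mem_Sa]
    simp only [memB, Bool.and_eq_true, Bool.not_eq_true', decide_eq_false_iff_not]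
    constructor
    · intro hu
      constructor
      · intro hx
        exact hind _ hx _ hu ((adj_inl_inrl _ _).mpr (Or.inl (val_castSucc k)))
      · intro hx
        exact hind _ hx _ hu ((adj_inl_inrl _ _).mpr (Or.inr (val_succ k)))
    · rintro ⟨hc, hs⟩
      by_contra hu
      obtain ⟨w, hw, hadj⟩ := hdom _ hu
      rcases w with j | (l | l)
      · rw [SimpleGraph.adj_comm, adj_inl_inrl] at hadj
        rcases hadj with hj | hj
        · exact hc (by rwa [show j = k.castSucc from Fin.ext hj] at hw)
        · exact hs (by rwa [show j = k.succ from Fin.ext hj] at hw)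
      · exact adj_inr_inr _ _ hadj
      · exact adj_inr_inr _ _ hadj
  · rw [mem_Sa]
    simp only [memB, Bool.and_eq_true, Bool.not_eq_true', decide_eq_false_iff_not]
    constructor
    · intro hu
      constructor
      · intro hx
        exact hind _ hx _ hu ((adj_inl_inrr _ _).mpr (Or.inl (val_castSucc k)))
      · intro hx
        exact hind _ hx _ hu ((adj_inl_inrr _ _).mpr (Or.inr (val_succ k)))
    · rintro ⟨hc, hs⟩
      by_contra hu
      obtain ⟨w, hw, hadj⟩ := hdom _ hu
      rcases w with j | (l | l)
      · rw [SimpleGraph.adj_comm, adj_inl_inrr] at hadj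
        rcases hadj with hj | hj
        · exact hc (by rwa [show j = k.castSucc from Fin.ext hj] at hw)
        · exact hs (by rwa [show j = k.succ from Fin.ext hj] at hw)
      · exact adj_inr_inr _ _ hadj
      · exact adj_inr_inr _ _ hadj

lemma ids_Sa_iff {n : ℕ} (a : Fin (n + 1) → Bool) :
    IsIndepDomSet (paraSq n) (Sa a) ↔ validFin a := by
  constructor
  · rintro ⟨hind, hdom⟩ i hi
    have hiv : Sum.inl i ∉ Sa a := by simp [mem_Sa, memB, hi]
    obtain ⟨w, hw, hadj⟩ := hdom _ hiv
    rcases w with j | (k | k)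
    · exact absurd hadj (adj_inl_inl _ _)
    · rw [adj_inl_inrl] at hadj
      rw [mem_Sa] at hw
      simp only [memB, Bool.and_eq_true, Bool.not_eq_true'] at hw
      refine ⟨k, ?_⟩
      rcases hadj with hj | hj
      · exact Or.inr ⟨Fin.ext hj.symm, hw.2⟩
      · exact Or.inl ⟨Fin.ext hj.symm, hw.1⟩
    · rw [adj_inl_inrr] at hadj
      rw [mem_Sa] at hw
      simp only [memB, Bool.and_eq_true, Bool.not_eq_true'] at hw
      refine ⟨k, ?_⟩
      rcases hadj with hj | hj
      · exact Or.inr ⟨Fin.ext hj.symm, hw.2⟩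
      · exact Or.inl ⟨Fin.ext hj.symm, hw.1⟩
  · intro hv
    constructor
    · intro v hvS w hwS hadj
      rw [mem_Sa] at hvS hwS
      rcases v with i | x <;> rcases w with j | y
      · exact adj_inl_inl _ _ hadj
      · rcases y with k | k
        · rw [adj_inl_inrl] at hadj
          simp only [memB, Bool.and_eq_true, Bool.not_eq_true'] at hvS hwS
          rcases hadj with hj | hj
          · rw [show i = k.castSucc from Fin.ext hj] at hvS
            rw [hvS] at hwS; simp at hwS
          · rw [show i = k.succ from Fin.ext hj] at hvS
            rw [hvS] at hwS; simp at hwS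
        · rw [adj_inl_inrr] at hadj
          simp only [memB, Bool.and_eq_true, Bool.not_eq_true'] at hvS hwS
          rcases hadj with hj | hj
          · rw [show i = k.castSucc from Fin.ext hj] at hvS
            rw [hvS] at hwS; simp at hwS
          · rw [show i = k.succ from Fin.ext hj] at hvS
            rw [hvS] at hwS; simp at hwS
      · rcases x with k | k
        · rw [SimpleGraph.adj_comm, adj_inl_inrl] at hadj
          simp only [memB, Bool.and_eq_true, Bool.not_eq_true'] at hvS hwS
          rcases hadj with hj | hj
          · rw [show j = k.castSucc from Fin.ext hj] at hwS
            rw [hwS] at hvS; simp at hvS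
          · rw [show j = k.succ from Fin.ext hj] at hwS
            rw [hwS] at hvS; simp at hvS
        · rw [SimpleGraph.adj_comm, adj_inl_inrr] at hadj
          simp only [memB, Bool.and_eq_true, Bool.not_eq_true'] at hvS hwS
          rcases hadj with hj | hj
          · rw [show j = k.castSucc from Fin.ext hj] at hwS
            rw [hwS] at hvS; simp at hvS
          · rw [show j = k.succ from Fin.ext hj] at hwS
            rw [hwS] at hvS; simp at hvS
      · exact adj_inr_inr _ _ hadj
    · intro v hvS
      rw [mem_Sa] at hvS
      rcases v with i | (k | k)
      · simp only [memB, Bool.not_eq_true] at hvS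
        obtain ⟨k, hk⟩ := hv i hvS
        rcases hk with ⟨hsucc, hcs⟩ | ⟨hcs, hsucc⟩
        · refine ⟨Sum.inr (Sum.inl k), ?_, ?_⟩
          · rw [mem_Sa]
            simp only [memB, Bool.and_eq_true, Bool.not_eq_true']
            exact ⟨hcs, by rw [hsucc]; exact hvS⟩
          · rw [adj_inl_inrl]
            exact Or.inr (by rw [← hsucc]; rfl)
        · refine ⟨Sum.inr (Sum.inl k), ?_, ?_⟩
          · rw [mem_Sa]
            simp only [memB, Bool.and_eq_true, Bool.not_eq_true']
            exact ⟨by rw [hcs]; exact hvS, hsucc⟩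
          · rw [adj_inl_inrl]
            exact Or.inl (by rw [← hcs]; rfl)
      · simp only [memB, Bool.and_eq_true, Bool.not_eq_true', not_and_or,
          Bool.not_eq_false] at hvS
        rcases hvS with h | h
        · exact ⟨Sum.inl k.castSucc, by simp [mem_Sa, memB, h],
            ((adj_inl_inrl _ _).mpr (Or.inl (val_castSucc k))).symm⟩
        · exact ⟨Sum.inl k.succ, by simp [mem_Sa, memB, h],
            ((adj_inl_inrl _ _).mpr (Or.inr (val_succ k))).symm⟩
      · simp only [memB, Bool.and_eq_true, Bool.not_eq_true', not_and_or,
          Bool.not_eq_false] at hvS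
        rcases hvS with h | h
        · exact ⟨Sum.inl k.castSucc, by simp [mem_Sa, memB, h],
            ((adj_inl_inrr _ _).mpr (Or.inl (val_castSucc k))).symm⟩
        · exact ⟨Sum.inl k.succ, by simp [mem_Sa, memB, h],
            ((adj_inl_inrr _ _).mpr (Or.inr (val_succ k))).symm⟩

noncomputable def idsEquiv (n : ℕ) :
    {S : Finset (Fin (n + 1) ⊕ (Fin n ⊕ Fin n)) // IsIndepDomSet (paraSq n) S} ≃
      {a : Fin (n + 1) → Bool // validFin a} where
  toFun := fun ⟨S, h⟩ => ⟨fun i => decide (Sum.inl i ∈ S), by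
    rw [← ids_Sa_iff, ← ids_eq_Sa S h]; exact h⟩
  invFun := fun ⟨a, h⟩ => ⟨Sa a, (ids_Sa_iff a).mpr h⟩
  left_inv := fun ⟨S, h⟩ => Subtype.ext (ids_eq_Sa S h).symm
  right_inv := fun ⟨a, h⟩ => Subtype.ext (funext fun i => by simp [mem_Sa, memB])

lemma getD_ofFn {m : ℕ} (a : Fin m → Bool) (i : ℕ) :
    (List.ofFn a).getD i true = if h : i < m then a ⟨i, h⟩ else true := by
  split
  · next h =>
      rw [List.getD_eq_getElem _ _ (by simpa using h)]
      simp
  · next h =>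
      apply List.getD_eq_default
      simpa using Nat.le_of_not_lt h

lemma validFin_iff_okQ {n : ℕ} (a : Fin (n + 1) → Bool) :
    validFin a ↔ okQ (List.ofFn a) := by
  constructor
  · intro hv i hi
    rw [getD_ofFn] at hi
    split at hi
    · next h =>
        obtain ⟨k, hk⟩ := hv ⟨i, h⟩ hi
        rcases hk with ⟨hsucc, hcs⟩ | ⟨hcs, hsucc⟩
        · left
          have hik : i = (k : ℕ) + 1 := by
            have := congrArg Fin.val hsucc; simpa using this.symm
          refine ⟨by omega, ?_⟩
          rw [getD_ofFn]
          rw [dif_pos (by omega : i - 1 < n + 1)]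
          have : (⟨i - 1, by omega⟩ : Fin (n + 1)) = k.castSucc := by
            apply Fin.ext; simp [hik]
          rw [this]; exact hcs
        · right
          have hik : i = (k : ℕ) := by
            have := congrArg Fin.val hcs; simpa using this.symm
          rw [getD_ofFn]
          rw [dif_pos (by have := k.isLt; omega : i + 1 < n + 1)]
          have : (⟨i + 1, by have := k.isLt; omega⟩ : Fin (n + 1)) = k.succ := by
            apply Fin.ext; simp [hik]
          rw [this]; exact hsucc
    · exact absurd hi (by simp)
  · intro hq i hi
    have hgd : (List.ofFn a).getD (i : ℕ) true = false := by
      rw [getD_ofFn, dif_pos i.isLt]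
      simpa using hi
    rcases hq _ hgd with ⟨hpos, hprev⟩ | hnext
    · rw [getD_ofFn] at hprev
      split at hprev
      · next h =>
          have hkn : (i : ℕ) - 1 < n := by have := i.isLt; omega
          refine ⟨⟨(i : ℕ) - 1, hkn⟩, Or.inl ⟨?_, ?_⟩⟩
          · apply Fin.ext; simp; omega
          · convert hprev using 2; rfl
      · next h => exact absurd hprev (by simp)
    · rw [getD_ofFn] at hnext
      split at hnext
      · next h =>
          have hkn : (i : ℕ) < n := by omega
          refine ⟨⟨(i : ℕ), hkn⟩, Or.inr ⟨?_, ?_⟩⟩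
          · apply Fin.ext; simp
          · convert hnext using 2; rfl
      · next h => exact absurd hnext (by simp)

lemma numIDSParaSq_eq_tri (n : ℕ) : numIDSParaSq n = (tri (n + 1)).1 := by
  rw [numIDSParaSq, Nat.card_congr (idsEquiv n)]
  rw [Nat.card_congr (Equiv.subtypeEquivRight (fun a => by
    rw [validFin_iff_okQ, ← (gAcc_spec (List.ofFn a)).1]))]
  exact (cnt_eq_tri (n + 1)).1

lemma tri_rec' (k : ℕ) :
    (tri (k + 4 + 1)).1 + (tri (k + 2 + 1)).1 =
      2 * (tri (k + 3 + 1)).1 + (tri (k + 1 + 1)).1 := by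
  simp [tri]; ring

/-- `q 1 = 2`, `q 2 = 4`, `q 3 = 7`, and `q n = 2·q (n-1) - q (n-2) + q (n-3)` for
`n ≥ 4`, where `q n` is the number of independent dominating sets of `Q n`. -/
theorem numIDSParaSq_recurrence :
    numIDSParaSq 1 = 2 ∧ numIDSParaSq 2 = 4 ∧ numIDSParaSq 3 = 7 ∧
      ∀ n : ℕ, 4 ≤ n →
        (numIDSParaSq n : ℤ) =
          2 * numIDSParaSq (n - 1) - numIDSParaSq (n - 2) + numIDSParaSq (n - 3) := by
  refine ⟨by rw [numIDSParaSq_eq_tri]; rfl, by rw [numIDSParaSq_eq_tri]; rfl,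
    by rw [numIDSParaSq_eq_tri]; rfl, ?_⟩
  intro n hn
  obtain ⟨k, rfl⟩ : ∃ k, n = k + 4 := ⟨n - 4, by omega⟩
  have h3 : k + 4 - 1 = k + 3 := by omega
  have h2 : k + 4 - 2 = k + 2 := by omega
  have h1 : k + 4 - 3 = k + 1 := by omega
  rw [h3, h2, h1, numIDSParaSq_eq_tri, numIDSParaSq_eq_tri, numIDSParaSq_eq_tri,
    numIDSParaSq_eq_tri]
  have h := tri_rec' k
  push_cast
  omega
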